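/- Let X be an n-independent set of d(n,k−1)+2 points all lying on an algebraic curve of degree k, with k ≤ n. Then this curve is the unique curve of degree k passing through all points of X; i.e., any two polynomials of degree ≤ k vanishing on X and of exact degree k define the same curve (are proportional). -/

import Mathlib

open MvPolynomial
open scoped Classical

/-- Evaluation of a bivariate polynomial at a point of the plane. -/
noncomputable def evalPt (p : MvPolynomial (Fin 2) ℝ) (A : ℝ × ℝ) : ℝ :=
  MvPolynomial.eval ![A.1, A.2] p

/-- `p` is an `n`-fundamental polynomial of the node `A` with respect to the node set `X`. -/
def IsFund (n : ℕ) (X : Finset (ℝ × ℝ)) (A : ℝ × ℝ)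
    (p : MvPolynomial (Fin 2) ℝ) : Prop :=
  p.totalDegree ≤ n ∧ evalPt p A = 1 ∧ ∀ B ∈ X, B ≠ A → evalPt p B = 0

/-- The node set `X` is `n`-independent. -/
def Indep (n : ℕ) (X : Finset (ℝ × ℝ)) : Prop :=
  ∀ A ∈ X, ∃ p, IsFund n X A p

/-- `d(n,k) = N_n - N_{n-k} = k(2n+3-k)/2`. -/
def dd (n k : ℕ) : ℕ := k * (2 * n + 3 - k) / 2

/-- The node set `X` is `n`-poised. -/
def Poised (n : ℕ) (X : Finset (ℝ × ℝ)) : Prop :=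
  X.card = (n + 1) * (n + 2) / 2 ∧
  ∀ p : MvPolynomial (Fin 2) ℝ, p.totalDegree ≤ n →
    (∀ A ∈ X, evalPt p A = 0) → p = 0

/-- The space of polynomials of total degree at most `n` vanishing on `X`. -/
noncomputable def vanishSp (n : ℕ) (X : Finset (ℝ × ℝ)) :
    Submodule ℝ (MvPolynomial (Fin 2) ℝ) :=
  MvPolynomial.restrictTotalDegree (Fin 2) ℝ n ⊓
    ⨅ A ∈ X, LinearMap.ker ((MvPolynomial.aeval (R := ℝ) ![A.1, A.2]).toLinearMap)

set_option synthInstance.maxHeartbeats 1000000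
set_option maxHeartbeats 4000000

namespace Stmt11Helper

abbrev MvP : Type := MvPolynomial (Fin 2) ℝ

noncomputable def Phi : MvP →+* Polynomial MvP :=
  eval₂Hom ((Polynomial.C).comp (C : ℝ →+* MvP)) (fun i => Polynomial.C (X i) * Polynomial.X)

lemma Phi_monomial (d : Fin 2 →₀ ℕ) (c : ℝ) :
    Phi (monomial d c) = Polynomial.C (monomial d c) * Polynomial.X ^ (d.sum fun _ e => e) := by
  rw [Phi, eval₂Hom_monomial]
  have h1 : (d.prod fun i e => (Polynomial.C (X i : MvP) * Polynomial.X) ^ e)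
      = Polynomial.C (d.prod fun i e => (X i : MvP) ^ e) *
        Polynomial.X ^ (d.sum fun _ e => e) := by
    rw [Finsupp.prod]
    simp only [mul_pow]
    rw [Finset.prod_mul_distrib, map_finsuppProd (Polynomial.C : MvP →+* Polynomial MvP)]
    · rw [Finsupp.prod, Finsupp.sum, Finset.prod_pow_eq_pow_sum]
      simp [map_pow]
  rw [h1, monomial_eq, map_mul]
  simp [RingHom.comp_apply, mul_assoc]

lemma coeff_Phi (p : MvP) (j : ℕ) :
    (Phi p).coeff j =
      ∑ d ∈ p.support.filter (fun d => (d.sum fun _ e => e) = j), monomial d (coeff d p) := by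
  conv_lhs => rw [p.as_sum, map_sum, Polynomial.finset_sum_coeff]
  rw [Finset.sum_filter]
  refine Finset.sum_congr rfl fun d _ => ?_
  rw [Phi_monomial, Polynomial.coeff_C_mul, Polynomial.coeff_X_pow]
  rcases eq_or_ne (d.sum fun _ e => e) j with h | h
  · simp [h]
  · simp [h, Ne.symm h]

lemma natDegree_Phi_le (p : MvP) : (Phi p).natDegree ≤ p.totalDegree := by
  rw [Polynomial.natDegree_le_iff_coeff_eq_zero]
  intro N hN
  rw [coeff_Phi]
  rw [Finset.filter_false_of_mem, Finset.sum_empty]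
  intro d hd h
  exact absurd ((h ▸ le_totalDegree hd :)) (by omega)

lemma coeff_Phi_ne_zero {p : MvP} (hp : p ≠ 0) : (Phi p).coeff p.totalDegree ≠ 0 := by
  obtain ⟨d₀, hd₀, hs⟩ : ∃ d ∈ p.support, (d.sum fun _ e => e) = p.totalDegree := by
    obtain ⟨d, hd, h⟩ := Finset.exists_mem_eq_sup p.support (support_nonempty.mpr hp)
      (fun d => d.sum fun _ e => e)
    exact ⟨d, hd, h.symm⟩
  rw [coeff_Phi]
  intro h0
  have h1 : coeff d₀ (∑ d ∈ p.support.filter (fun d => (d.sum fun _ e => e) = p.totalDegree),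
      monomial d (coeff d p)) = coeff d₀ p := by
    rw [coeff_sum, Finset.sum_eq_single d₀]
    · simp
    · intro b _ hb; simp [coeff_monomial, hb]
    · intro hmem; exact absurd (Finset.mem_filter.mpr ⟨hd₀, hs⟩) hmem
  rw [h0] at h1
  simp only [coeff_zero] at h1
  exact mem_support_iff.mp hd₀ h1.symm

lemma Phi_ne_zero {p : MvP} (hp : p ≠ 0) : Phi p ≠ 0 := fun h =>
  coeff_Phi_ne_zero hp (by rw [h, Polynomial.coeff_zero])

lemma natDegree_Phi {p : MvP} (hp : p ≠ 0) : (Phi p).natDegree = p.totalDegree :=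
  le_antisymm (natDegree_Phi_le p) (Polynomial.le_natDegree_of_ne_zero (coeff_Phi_ne_zero hp))

lemma totalDegree_mul_eq {p q : MvP} (hp : p ≠ 0) (hq : q ≠ 0) :
    (p * q).totalDegree = p.totalDegree + q.totalDegree := by
  have h := Polynomial.natDegree_mul (Phi_ne_zero hp) (Phi_ne_zero hq)
  rw [← map_mul, natDegree_Phi (mul_ne_zero hp hq), natDegree_Phi hp, natDegree_Phi hq] at h
  exact h

/-! ### Dimension counting -/

def Dn (m : ℕ) : ℕ := (m + 1) * (m + 2) / 2

lemma two_Dn (m : ℕ) : 2 * Dn m = (m + 1) * (m + 2) :=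
  Nat.mul_div_cancel' (Nat.even_mul_succ_self (m + 1)).two_dvd

lemma Dn_mono {i j : ℕ} (h : i ≤ j) : Dn i ≤ Dn j :=
  Nat.div_le_div_right (Nat.mul_le_mul (by omega) (by omega))

noncomputable def Fm (m : ℕ) : Finset (ℕ × ℕ) :=
  (Finset.range (m + 1)).biUnion (fun s => Finset.HasAntidiagonal.antidiagonal s)

lemma mem_Fm {m : ℕ} {x : ℕ × ℕ} : x ∈ Fm m ↔ x.1 + x.2 ≤ m := by
  simp only [Fm, Finset.mem_biUnion, Finset.mem_range, Finset.HasAntidiagonal.mem_antidiagonal]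
  exact ⟨fun ⟨s, h1, h2⟩ => by omega, fun h => ⟨x.1 + x.2, by omega, rfl⟩⟩

lemma card_Fm (m : ℕ) : (Fm m).card = Dn m := by
  rw [Fm, Finset.card_biUnion]
  · rw [show (fun s => (Finset.HasAntidiagonal.antidiagonal s).card) = fun s => s + 1 from
      funext fun s => Finset.Nat.card_antidiagonal s]
    induction m with
    | zero => simp [Dn]
    | succ m ih =>
      rw [Finset.sum_range_succ, ih]
      have h1 := two_Dn m
      have h2 := two_Dn (m + 1)
      have h3 : (m + 1 + 1) * (m + 1 + 2) = (m + 1) * (m + 2) + 2 * (m + 2) := by ring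
      generalize (m + 1) * (m + 2) = P1 at h1 h3
      generalize (m + 1 + 1) * (m + 1 + 2) = P2 at h2 h3
      omega
  · intro s _ t _ hst
    rw [Function.onFun, Finset.disjoint_left]
    intro x hx hx'
    rw [Finset.HasAntidiagonal.mem_antidiagonal] at hx hx'
    omega

lemma finrank_Pn (m : ℕ) :
    Module.finrank ℝ (restrictTotalDegree (Fin 2) ℝ m) = Dn m := by
  have hsum : ∀ f : Fin 2 →₀ ℕ, (f.sum fun _ e => e) = f 0 + f 1 := fun f => by
    rw [Finsupp.sum_fintype _ _ (fun _ => rfl), Fin.sum_univ_two]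
  set S : Set (Fin 2 →₀ ℕ) := {d | (d.sum fun _ e => e) ≤ m} with hS
  have e : S ≃ (Fm m : Finset (ℕ × ℕ)) :=
    { toFun := fun f => ⟨(f.1 0, f.1 1), by
        rw [mem_Fm]
        have := f.2
        simpa only [hS, Set.mem_setOf_eq, hsum] using this⟩
      invFun := fun x => ⟨Finsupp.equivFunOnFinite.symm ![x.1.1, x.1.2], by
        have := mem_Fm.mp x.2
        simp only [hS, Set.mem_setOf_eq, hsum]
        simpa using this⟩
      left_inv := fun f => Subtype.ext (by
        ext i
        fin_cases i <;> rfl)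
      right_inv := fun x => Subtype.ext (by
        show ((_ : Fin 2 → ℕ) 0, _) = x.1
        rfl) }
  letI : Fintype S := Fintype.ofEquiv _ e.symm
  have hb : Module.finrank ℝ (restrictSupport ℝ S) = Fintype.card S :=
    Module.finrank_eq_card_basis (basisRestrictSupport ℝ S)
  show Module.finrank ℝ (restrictSupport ℝ S) = Dn m
  rw [hb, Fintype.card_congr e, Fintype.card_coe, card_Fm]

lemma aeval_eq_evalPt (q : MvPolynomial (Fin 2) ℝ) (B : ℝ × ℝ) :
    (aeval (R := ℝ) ![B.1, B.2]) q = evalPt q B := rfl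

lemma finrank_vanish (n : ℕ) (X : Finset (ℝ × ℝ)) (hX : Indep n X) :
    Module.finrank ℝ (vanishSp n X) + X.card = Dn n := by
  classical
  set P := restrictTotalDegree (Fin 2) ℝ n with hP
  let E : P →ₗ[ℝ] (↥X → ℝ) :=
    LinearMap.pi fun A : ↥X =>
      ((aeval (R := ℝ) ![A.1.1, A.1.2]).toLinearMap.comp P.subtype)
  have hker : LinearMap.ker E = Submodule.comap P.subtype (vanishSp n X) := by
    ext p
    simp only [E, LinearMap.ker_pi, Submodule.mem_iInf, LinearMap.mem_ker,
      LinearMap.comp_apply, Submodule.mem_comap, vanishSp, Submodule.mem_inf,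
      AlgHom.toLinearMap_apply, Submodule.subtype_apply]
    constructor
    · intro h
      exact ⟨p.2, fun A hA => h ⟨A, hA⟩⟩
    · intro h A
      exact h.2 A.1 A.2
  have hsurj : LinearMap.range E = ⊤ := by
    rw [eq_top_iff]
    intro v _
    rw [pi_eq_sum_univ v]
    refine Submodule.sum_mem _ fun A _ => Submodule.smul_mem _ _ ?_
    obtain ⟨p, hdeg, hval, hzero⟩ := hX A.1 A.2
    refine ⟨⟨p, (mem_restrictTotalDegree _ _ _).mpr hdeg⟩, ?_⟩
    funext B
    show (aeval (R := ℝ) ![B.1.1, B.1.2]) p = _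
    rw [aeval_eq_evalPt]
    by_cases hAB : A = B
    · subst hAB
      simp [hval]
    · rw [if_neg hAB]
      exact hzero B.1 B.2 (fun h => hAB (Subtype.ext h.symm))
  have h1 := LinearMap.finrank_range_add_finrank_ker E
  rw [hsurj, hker] at h1
  rw [finrank_top, Module.finrank_fintype_fun_eq_card, Fintype.card_coe] at h1
  have h2 : Module.finrank ℝ (Submodule.comap P.subtype (vanishSp n X))
      = Module.finrank ℝ (vanishSp n X) :=
    (Submodule.comapSubtypeEquivOfLe (inf_le_left : vanishSp n X ≤ P)).finrank_eq
  rw [h2] at h1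
  rw [← finrank_Pn n, ← hP]
  omega

lemma eq_C_of_tdeg_zero {p : MvP} (hp : p.totalDegree = 0) : p = C (coeff 0 p) := by
  ext d
  rcases eq_or_ne d 0 with rfl | hd
  · simp
  · rw [coeff_C, if_neg (Ne.symm hd)]
    by_contra hco
    have hmem : d ∈ p.support := mem_support_iff.mpr hco
    have := (totalDegree_eq_zero_iff _ p).mp hp d hmem
    exact hd (Finsupp.ext fun x => this x)

lemma dd_Dn (n k : ℕ) (h1 : 1 ≤ k) (h2 : k ≤ n) :
    dd n (k - 1) + Dn (n - k + 1) = Dn n := by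
  obtain ⟨k', rfl⟩ : ∃ k', k = k' + 1 := ⟨k - 1, by omega⟩
  obtain ⟨a, rfl⟩ : ∃ a, n = a + k' + 1 := ⟨n - k' - 1, by omega⟩
  have e1 : k' + 1 - 1 = k' := by omega
  have e2 : a + k' + 1 - (k' + 1) + 1 = a + 1 := by omega
  rw [e1, e2]
  have heven : Even (k' * (2 * (a + k' + 1) + 3 - k')) := by
    rcases Nat.even_or_odd k' with h | h
    · exact h.mul_right _
    · refine Even.mul_left ?_ _
      rw [Nat.even_iff]
      rw [Nat.odd_iff] at h
      omega
  have hdd2 : 2 * dd (a + k' + 1) k' = k' * (2 * (a + k' + 1) + 3 - k') := by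
    rw [dd]
    exact Nat.mul_div_cancel' heven.two_dvd
  have e3 : 2 * (a + k' + 1) + 3 - k' = 2 * a + k' + 5 := by omega
  rw [e3] at hdd2
  have hD1 := two_Dn (a + 1)
  have hDn := two_Dn (a + k' + 1)
  have hring : k' * (2 * a + k' + 5) + (a + 1 + 1) * (a + 1 + 2)
      = (a + k' + 1 + 1) * (a + k' + 1 + 2) := by ring
  generalize k' * (2 * a + k' + 5) = P1 at hdd2 hring
  generalize (a + 1 + 1) * (a + 1 + 2) = P2 at hD1 hring
  generalize (a + k' + 1 + 1) * (a + k' + 1 + 2) = P3 at hDn hring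
  omega

end Stmt11Helper

open Stmt11Helper in
theorem stmt11 (n k : ℕ) (hk : k ≤ n) (X : Finset (ℝ × ℝ))
    (hX : Indep n X) (hcard : X.card = dd n (k - 1) + 2)
    (hcurve : ∃ q : MvPolynomial (Fin 2) ℝ, q.totalDegree = k ∧
      ∀ A ∈ X, evalPt q A = 0)
    (p₁ p₂ : MvPolynomial (Fin 2) ℝ)
    (h₁ : p₁.totalDegree = k) (h₂ : p₂.totalDegree = k)
    (hv₁ : ∀ A ∈ X, evalPt p₁ A = 0) (hv₂ : ∀ A ∈ X, evalPt p₂ A = 0) :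
    ∃ c : ℝ, c ≠ 0 ∧ p₂ = c • p₁ := by
  classical
  rcases Nat.eq_zero_or_pos k with rfl | hkpos
  · -- degenerate case k = 0 : both polynomials are zero
    have hXne : X.Nonempty := Finset.card_pos.mp (by omega)
    obtain ⟨A, hA⟩ := hXne
    have hzero : ∀ p : MvPolynomial (Fin 2) ℝ, p.totalDegree = 0 →
        (∀ B ∈ X, evalPt p B = 0) → p = 0 := by
      intro p hp hv
      have hC := eq_C_of_tdeg_zero hp
      have hvA := hv A hA
      rw [hC] at hvA ⊢
      rw [evalPt, eval_C] at hvA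
      rw [hvA, map_zero]
    rw [hzero p₂ h₂ hv₂, hzero p₁ h₁ hv₁]
    exact ⟨1, one_ne_zero, by simp⟩
  by_contra hcon
  have hp₁0 : p₁ ≠ 0 := fun h => by rw [h, totalDegree_zero] at h₁; omega
  have hp₂0 : p₂ ≠ 0 := fun h => by rw [h, totalDegree_zero] at h₂; omega
  obtain ⟨a', b', c', hrel, hga, hgb⟩ :=
    UniqueFactorizationMonoid.exists_reduced_factors' p₁ p₂ hp₂0
  have hc'0 : c' ≠ 0 := fun h => hp₁0 (by rw [← hga, h, zero_mul])
  have ha'0 : a' ≠ 0 := fun h => hp₁0 (by rw [← hga, h, mul_zero])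
  have hb'0 : b' ≠ 0 := fun h => hp₂0 (by rw [← hgb, h, mul_zero])
  have hdeg1 : c'.totalDegree + a'.totalDegree = k := by
    rw [← totalDegree_mul_eq hc'0 ha'0, hga, h₁]
  have hdeg2 : c'.totalDegree + b'.totalDegree = k := by
    rw [← totalDegree_mul_eq hc'0 hb'0, hgb, h₂]
  set t := b'.totalDegree with ht
  rcases Nat.eq_zero_or_pos t with ht0 | htpos
  · -- the cofactors are constants, so p₂ is proportional to p₁
    apply hcon
    have ha't : a'.totalDegree = 0 := by omega
    have haC := eq_C_of_tdeg_zero ha't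
    have hbC := eq_C_of_tdeg_zero (ht0 : b'.totalDegree = 0)
    set ca := coeff 0 a' with hca'
    set cb := coeff 0 b' with hcb'
    have hca : ca ≠ 0 := fun h => ha'0 (by rw [haC, h, map_zero])
    have hcb : cb ≠ 0 := fun h => hb'0 (by rw [hbC, h, map_zero])
    refine ⟨cb / ca, div_ne_zero hcb hca, ?_⟩
    rw [smul_eq_C_mul, ← hgb, ← hga, hbC, haC]
    have hstep : (C (cb / ca) : MvPolynomial (Fin 2) ℝ) * (c' * C ca)
        = c' * C (cb / ca * ca) := by
      rw [map_mul]; ring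
    rw [hstep, div_mul_cancel₀ cb hca]
  -- main case : 1 ≤ t, dimension count
  have ht1 : a'.totalDegree = t := by omega
  set A := Submodule.map (LinearMap.mulLeft ℝ p₁) (restrictTotalDegree (Fin 2) ℝ (n - k)) with hA
  set B := Submodule.map (LinearMap.mulLeft ℝ p₂) (restrictTotalDegree (Fin 2) ℝ (n - k)) with hB
  have hinj : ∀ q : MvPolynomial (Fin 2) ℝ, q ≠ 0 →
      Function.Injective (LinearMap.mulLeft ℝ q) := fun q hq x y h =>
    mul_left_cancel₀ hq (by simpa only [LinearMap.mulLeft_apply] using h)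
  have hsub : ∀ q : MvPolynomial (Fin 2) ℝ, q.totalDegree = k → (∀ A ∈ X, evalPt q A = 0) →
      Submodule.map (LinearMap.mulLeft ℝ q) (restrictTotalDegree (Fin 2) ℝ (n - k))
        ≤ vanishSp n X := by
    rintro q hq hqv x ⟨r, hr, rfl⟩
    replace hr : r.totalDegree ≤ n - k := (mem_restrictTotalDegree _ _ _).mp hr
    rw [LinearMap.mulLeft_apply]
    refine Submodule.mem_inf.mpr ⟨?_, ?_⟩
    · rw [mem_restrictTotalDegree]
      calc (q * r).totalDegree ≤ q.totalDegree + r.totalDegree := totalDegree_mul _ _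
        _ ≤ n := by omega
    · simp only [Submodule.mem_iInf]
      intro P hP
      rw [LinearMap.mem_ker, AlgHom.toLinearMap_apply, aeval_eq_evalPt]
      show MvPolynomial.eval ![P.1, P.2] (q * r) = 0
      rw [map_mul]
      have := hqv P hP
      rw [evalPt] at this
      rw [this, zero_mul]
  have hAV : A ≤ vanishSp n X := hsub p₁ h₁ hv₁
  have hBV : B ≤ vanishSp n X := hsub p₂ h₂ hv₂
  have hfA : Module.finrank ℝ A = Dn (n - k) := by
    rw [← finrank_Pn (n - k)]
    exact ((Submodule.equivMapOfInjective _ (hinj p₁ hp₁0) _).finrank_eq).symm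
  have hfB : Module.finrank ℝ B = Dn (n - k) := by
    rw [← finrank_Pn (n - k)]
    exact ((Submodule.equivMapOfInjective _ (hinj p₂ hp₂0) _).finrank_eq).symm
  have key : ∀ x ∈ A ⊓ B, x = 0 ∨ (k + t ≤ n ∧
      x ∈ Submodule.map (LinearMap.mulLeft ℝ (p₁ * b'))
        (restrictTotalDegree (Fin 2) ℝ (n - k - t))) := by
    intro x hx
    obtain ⟨r₁, hr₁, hx1⟩ := Submodule.mem_map.mp (Submodule.mem_inf.mp hx).1
    obtain ⟨r₂, hr₂, hx2⟩ := Submodule.mem_map.mp (Submodule.mem_inf.mp hx).2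
    rw [LinearMap.mulLeft_apply] at hx1 hx2
    rcases eq_or_ne r₁ 0 with rfl | h0
    · left; rw [← hx1, mul_zero]
    right
    have heq : a' * r₁ = b' * r₂ := by
      apply mul_left_cancel₀ hc'0
      rw [← mul_assoc, hga, ← mul_assoc, hgb, hx1, hx2]
    have hdvd : b' ∣ r₁ := (hrel.symm).dvd_of_dvd_mul_left ⟨r₂, heq⟩
    obtain ⟨u, rfl⟩ := hdvd
    have hu0 : u ≠ 0 := fun h => h0 (by rw [h, mul_zero])
    rw [mem_restrictTotalDegree] at hr₁
    rw [totalDegree_mul_eq hb'0 hu0] at hr₁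
    constructor
    · omega
    refine ⟨u, ?_, ?_⟩
    · exact (mem_restrictTotalDegree _ _ _).mpr (by omega)
    · rw [LinearMap.mulLeft_apply, ← hx1, mul_assoc]
  haveI : FiniteDimensional ℝ (vanishSp n X) :=
    Submodule.finiteDimensional_of_le
      (inf_le_left : vanishSp n X ≤ restrictTotalDegree (Fin 2) ℝ n)
  have hfV := finrank_vanish n X hX
  set f := Module.finrank ℝ (vanishSp n X) with hf
  set e := Module.finrank ℝ (A ⊓ B : Submodule ℝ (MvPolynomial (Fin 2) ℝ)) with he
  have hsupinf := Submodule.finrank_sup_add_finrank_inf_eq A B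
  have hsuple : Module.finrank ℝ (A ⊔ B : Submodule ℝ (MvPolynomial (Fin 2) ℝ)) ≤ f :=
    Submodule.finrank_mono (sup_le hAV hBV)
  have key2 : 2 * Dn (n - k) ≤ f + e := by
    rw [hfA, hfB] at hsupinf
    omega
  have hid := dd_Dn n k hkpos hk
  have key3 : f + 2 = Dn (n - k + 1) := by omega
  obtain ⟨a, ha⟩ : ∃ a, n - k = a := ⟨n - k, rfl⟩
  rcases le_or_gt (k + t) n with hkt | hkt
  · -- intersection is at most the multiples of p₁ * b'
    have hABle : A ⊓ B ≤ Submodule.map (LinearMap.mulLeft ℝ (p₁ * b'))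
        (restrictTotalDegree (Fin 2) ℝ (n - k - t)) := by
      intro x hx
      rcases key x hx with rfl | ⟨_, h⟩
      · exact Submodule.zero_mem _
      · exact h
    have h5 : e ≤ Dn (n - k - t) := by
      rw [he]
      refine le_trans (Submodule.finrank_mono hABle) ?_
      refine le_trans (Submodule.finrank_map_le _ _) ?_
      exact le_of_eq (finrank_Pn _)
    obtain ⟨c, hc⟩ : ∃ c, n - k = c + 1 := ⟨n - k - 1, by omega⟩
    have e5 : n - k - t ≤ c := by omega
    have e6 : n - k + 1 = c + 2 := by omega
    rw [hc] at key2
    rw [e6] at key3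
    have h6 : e ≤ Dn c := le_trans h5 (Dn_mono e5)
    have q0 := two_Dn c
    have q1 := two_Dn (c + 1)
    have q2 := two_Dn (c + 2)
    have r0 : (c + 1) * (c + 2) = c * c + 3 * c + 2 := by ring
    have r1 : (c + 1 + 1) * (c + 1 + 2) = c * c + 5 * c + 6 := by ring
    have r2 : (c + 2 + 1) * (c + 2 + 2) = c * c + 7 * c + 12 := by ring
    rw [r0] at q0; rw [r1] at q1; rw [r2] at q2
    generalize c * c = s at q0 q1 q2
    omega
  · -- the intersection is trivial
    have hABbot : A ⊓ B = ⊥ := by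
      rw [eq_bot_iff]
      intro x hx
      rcases key x hx with rfl | ⟨h, _⟩
      · exact Submodule.zero_mem _
      · omega
    have he0 : e = 0 := by rw [he, hABbot, finrank_bot]
    rw [ha] at key2
    have e6 : n - k + 1 = a + 1 := by omega
    rw [e6] at key3
    have q0 := two_Dn a
    have q1 := two_Dn (a + 1)
    have r0 : (a + 1) * (a + 2) = a * a + 3 * a + 2 := by ring
    have r1 : (a + 1 + 1) * (a + 1 + 2) = a * a + 5 * a + 6 := by ring
    rw [r0] at q0; rw [r1] at q1
    generalize a * a = s at q0 q1
    omega
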